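/- The Hopf fibration f : S³ → S² induces a homeomorphism from the orbit space S³/S¹, equipped with the quotient topology, onto the unit 2-sphere S² with its subspace topology. -/

import Mathlib

open Complex

/-- The unit 3-sphere in `ℂ²`. -/
def S3 : Set (ℂ × ℂ) := {p | ‖p.1‖ ^ 2 + ‖p.2‖ ^ 2 = 1}

/-- The unit 2-sphere in `ℂ × ℝ`. -/
def S2 : Set (ℂ × ℝ) := {p | ‖p.1‖ ^ 2 + p.2 ^ 2 = 1}

/-- The Hopf fibration `f(z,w) = (2 z w̄, |z|² − |w|²)`. -/
noncomputable def hopf (p : ℂ × ℂ) : ℂ × ℝ :=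
  (2 * p.1 * (starRingEnd ℂ) p.2, ‖p.1‖ ^ 2 - ‖p.2‖ ^ 2)

/-- Two points of `S³` are related iff they lie in the same orbit of the diagonal
action of the circle group `S¹` by complex multiplication. -/
def circleRel (p p' : S3) : Prop :=
  ∃ lam : ℂ, ‖lam‖ = 1 ∧
    (p' : ℂ × ℂ) = (lam * (p : ℂ × ℂ).1, lam * (p : ℂ × ℂ).2)

lemma hopf_mem {p : ℂ × ℂ} (hp : p ∈ S3) : hopf p ∈ S2 := by
  simp only [S3, Set.mem_setOf_eq] at hp
  simp only [S2, hopf, Set.mem_setOf_eq, map_mul, norm_mul, Complex.norm_conj]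
  have h1 : ‖(2:ℂ)‖ = 2 := by
    simpa using Complex.norm_two
  rw [h1]
  nlinarith [norm_nonneg p.1, norm_nonneg p.2]

noncomputable def hopfS (p : S3) : S2 := ⟨hopf (p : ℂ × ℂ), hopf_mem p.2⟩

lemma hopf_continuous : Continuous hopf := by
  apply Continuous.prodMk
  · exact (continuous_const.mul continuous_fst).mul (Complex.continuous_conj.comp continuous_snd)
  · exact ((continuous_norm.comp continuous_fst).pow 2).sub
      ((continuous_norm.comp continuous_snd).pow 2)

lemma hopfS_continuous : Continuous hopfS := by
  apply Continuous.subtype_mk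
  exact hopf_continuous.comp continuous_subtype_val

lemma hopfS_respects {p p' : S3} (h : circleRel p p') : hopfS p = hopfS p' := by
  obtain ⟨lam, hlam, heq⟩ := h
  obtain ⟨⟨z, w⟩, hp⟩ := p
  apply Subtype.ext
  simp only [hopfS, hopf, heq]
  have h1 : lam * (starRingEnd ℂ) lam = 1 := by
    rw [Complex.mul_conj]
    norm_cast
    rw [← Complex.sq_norm, hlam]; norm_num
  rw [Prod.mk.injEq]
  constructor
  · simp only [map_mul]
    linear_combination (-2 * z * (starRingEnd ℂ) w) * h1
  · simp [map_mul, hlam]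

noncomputable def q : Quot circleRel → S2 := Quot.lift hopfS (fun _ _ h => hopfS_respects h)

lemma q_injective : Function.Injective q := by
  intro a b
  induction a using Quot.ind with | _ p =>
  induction b using Quot.ind with | _ p' =>
  intro h
  apply Quot.sound
  obtain ⟨⟨z, w⟩, hp⟩ := p
  obtain ⟨⟨z', w'⟩, hp'⟩ := p'
  simp only [S3, Set.mem_setOf_eq] at hp hp'
  simp only [q, hopfS, hopf, Subtype.mk.injEq, Prod.mk.injEq] at h
  obtain ⟨h1, h2⟩ := h
  have habsz : ‖z‖ = ‖z'‖ := by
    nlinarith [norm_nonneg z, norm_nonneg z']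
  have habsw : ‖w‖ = ‖w'‖ := by
    nlinarith [norm_nonneg w, norm_nonneg w']
  simp only [circleRel, Prod.mk.injEq]
  by_cases hz : z = 0
  · have hz' : z' = 0 := by
      have h0 : ‖z'‖ = 0 := by rw [← habsz, hz, norm_zero]
      exact norm_eq_zero.mp h0
    have hw : w ≠ 0 := by
      intro h0
      rw [hz, h0] at hp; simp at hp
    refine ⟨w' / w, ?_, ?_, ?_⟩
    · rw [norm_div, ← habsw, div_self]
      simpa using hw
    · simp [hz, hz']
    · field_simp
  · have hz' : z' ≠ 0 := by
      intro h0
      rw [h0, norm_zero, norm_eq_zero] at habsz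
      exact hz habsz
    refine ⟨z' / z, ?_, ?_, ?_⟩
    · rw [norm_div, ← habsz, div_self]
      simpa using hz
    · field_simp
    · -- from h1 : 2 z w̄ = 2 z' w̄'
      have key : (starRingEnd ℂ) ((starRingEnd ℂ) z' * w') = (starRingEnd ℂ) ((starRingEnd ℂ) z * w) := by
        simp only [map_mul, Complex.conj_conj]
        linear_combination -h1 / 2
      have key2 : (starRingEnd ℂ) z' * w' = (starRingEnd ℂ) z * w :=
        (starRingEnd ℂ).injective key
      have hns : (starRingEnd ℂ) z * z = (starRingEnd ℂ) z' * z' := by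
        rw [mul_comm, mul_comm _ z', Complex.mul_conj, Complex.mul_conj]
        norm_cast
        rw [← Complex.sq_norm, ← Complex.sq_norm, habsz]
      have hcz' : (starRingEnd ℂ) z' ≠ 0 := by
        simpa using hz'
      field_simp
      apply mul_left_cancel₀ hcz'
      calc (starRingEnd ℂ) z' * (w' * z) = ((starRingEnd ℂ) z' * w') * z := by ring
        _ = ((starRingEnd ℂ) z * w) * z := by rw [key2]
        _ = ((starRingEnd ℂ) z * z) * w := by ring
        _ = ((starRingEnd ℂ) z' * z') * w := by rw [hns]
        _ = (starRingEnd ℂ) z' * (z' * w) := by ring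

lemma q_surjective : Function.Surjective q := by
  rintro ⟨⟨a, x⟩, hx⟩
  simp only [S2, Set.mem_setOf_eq] at hx
  by_cases hx1 : x = -1
  · have ha : a = 0 := by
      rw [hx1] at hx
      have : ‖a‖ ^ 2 = 0 := by nlinarith
      simpa [pow_eq_zero_iff] using this
    refine ⟨Quot.mk _ ⟨(0, 1), ?_⟩, ?_⟩
    · simp [S3]
    · apply Subtype.ext
      simp [q, hopfS, hopf, ha, hx1]
  · have hx2 : x ≥ -1 := by nlinarith [norm_nonneg a, sq_nonneg (‖a‖)]
    have hxgt : -1 < x := lt_of_le_of_ne hx2 (Ne.symm hx1)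
    have hpos : (0:ℝ) < (1 + x) / 2 := by linarith
    set r : ℝ := Real.sqrt ((1 + x) / 2) with hr
    have hrpos : 0 < r := Real.sqrt_pos.mpr hpos
    have hr2 : r ^ 2 = (1 + x) / 2 := Real.sq_sqrt hpos.le
    have hrne : (r : ℂ) ≠ 0 := by exact_mod_cast hrpos.ne'
    set w : ℂ := (starRingEnd ℂ) a / (2 * r) with hw
    have habsw : ‖w‖ ^ 2 = (1 - x) / 2 := by
      rw [hw, norm_div, norm_mul, Complex.norm_conj]
      have h2 : ‖(2:ℂ)‖ = 2 := by simpa using Complex.norm_two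
      rw [h2, Complex.norm_real, Real.norm_eq_abs, abs_of_pos hrpos, div_pow]
      rw [mul_pow, hr2]
      have ha2 : ‖a‖ ^ 2 = 1 - x ^ 2 := by linarith
      rw [ha2]
      have hdpos : (0:ℝ) < 2 ^ 2 * ((1 + x) / 2) := by nlinarith
      rw [div_eq_div_iff hdpos.ne' two_ne_zero]
      ring
    have hmem : ((r : ℂ), w) ∈ S3 := by
      simp only [S3, Set.mem_setOf_eq, habsw, Complex.norm_real, Real.norm_eq_abs, abs_of_pos hrpos]
      rw [hr2]; ring
    refine ⟨Quot.mk _ ⟨((r:ℂ), w), hmem⟩, ?_⟩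
    apply Subtype.ext
    simp only [q, hopfS, hopf, Prod.mk.injEq]
    constructor
    · rw [hw, map_div₀, Complex.conj_conj, map_mul, Complex.conj_ofReal, map_ofNat]
      field_simp
    · rw [habsw, Complex.norm_real, Real.norm_eq_abs, abs_of_pos hrpos, hr2]; ring

instance : CompactSpace S3 := by
  rw [← isCompact_iff_compactSpace]
  apply Metric.isCompact_of_isClosed_isBounded
  · have : S3 = (fun p : ℂ × ℂ => ‖p.1‖ ^ 2 + ‖p.2‖ ^ 2) ⁻¹' {1} := rfl
    rw [this]
    apply IsClosed.preimage
    · exact ((continuous_norm.comp continuous_fst).pow 2).add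
        ((continuous_norm.comp continuous_snd).pow 2)
    · exact isClosed_singleton
  · apply (Metric.isBounded_closedBall (x := (0 : ℂ × ℂ)) (r := 1)).subset
    intro p hp
    simp only [S3, Set.mem_setOf_eq] at hp
    rw [Metric.mem_closedBall, dist_zero_right, Prod.norm_def]
    have h1 : ‖p.1‖ ≤ 1 := by
      nlinarith [norm_nonneg p.1, norm_nonneg p.2, sq_nonneg (‖p.2‖)]
    have h2 : ‖p.2‖ ≤ 1 := by
      nlinarith [norm_nonneg p.1, norm_nonneg p.2]
    exact max_le h1 h2

/-- The Hopf fibration induces a homeomorphism from the orbit space `S³/S¹`, with the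
quotient topology, onto the unit 2-sphere `S²` with its subspace topology. -/
theorem hopf_induces_homeomorph_orbitSpace_sphere :
    ∃ h : Quot circleRel ≃ₜ S2,
      ∀ p : S3, ((h (Quot.mk circleRel p) : ℂ × ℝ)) = hopf (p : ℂ × ℂ) := by
  have hqc : Continuous q := continuous_quot_lift (fun _ _ h => hopfS_respects h) hopfS_continuous
  let e : Quot circleRel ≃ S2 := Equiv.ofBijective q ⟨q_injective, q_surjective⟩
  have he : Continuous e := hqc
  exact ⟨he.homeoOfEquivCompactToT2, fun p => rfl⟩
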